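/- Let G be a simple connected graph on n ≥ 4 vertices with diameter d ≥ 3, remoteness ρ, and distance eigenvalues ∂_1 ≥ ∂_2 ≥ ... ≥ ∂_n. Then ρ + ∂_3 > 0. -/

import Mathlib

set_option linter.unusedSectionVars false
set_option maxHeartbeats 1000000

open Finset
open Matrix

namespace DistPaper

variable {V : Type*} [Fintype V] [DecidableEq V]

/-- The distance matrix of a graph: the `(u,v)` entry is the graph distance. -/
noncomputable def distMatrix (G : SimpleGraph V) : Matrix V V ℝ :=
  fun u v => (G.dist u v : ℝ)

lemma isHermitian_distMatrix (G : SimpleGraph V) : (distMatrix G).IsHermitian := by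
  ext u v
  simp [distMatrix, Matrix.conjTranspose_apply, SimpleGraph.dist_comm]

/-- The `k`-th largest eigenvalue (1-indexed, so `k = 1` is the largest) of the
distance matrix of `G`; junk value `0` if `k - 1 ≥ |V|`. -/
noncomputable def distEig (G : SimpleGraph V) (k : ℕ) : ℝ :=
  if h : k - 1 < Fintype.card V then
    ((isHermitian_distMatrix G).eigenvalues ∘ (Fintype.equivFin V).symm)
      (Tuple.sort ((isHermitian_distMatrix G).eigenvalues ∘ (Fintype.equivFin V).symm)
        (Fin.rev ⟨k - 1, h⟩))
  else 0

/-- The transmission of a vertex: the sum of the distances to all other vertices. -/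
noncomputable def transmission (G : SimpleGraph V) (v : V) : ℕ :=
  ∑ u, G.dist v u

/-- The remoteness of a graph: the maximum over all vertices of the average
distance from that vertex to the others, `ρ = max_v Tr(v)/(n-1)`. -/
noncomputable def remoteness (G : SimpleGraph V) : ℝ :=
  ((univ.sup (transmission G) : ℕ) : ℝ) / ((Fintype.card V : ℝ) - 1)

/-- `G` is a complete multipartite graph: vertices can be classified so that two
vertices are adjacent iff they lie in different classes. -/
def IsCompleteMultipartite (G : SimpleGraph V) : Prop :=
  ∃ f : V → V, ∀ u v, G.Adj u v ↔ f u ≠ f v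

/-- The `k`-th largest eigenvalue (1-indexed) of the Laplacian matrix of `G`;
junk value `0` if `k - 1 ≥ |V|`. -/
noncomputable def lapEig (G : SimpleGraph V) (k : ℕ) : ℝ := by
  classical
  exact if h : k - 1 < Fintype.card V then
    (((SimpleGraph.posSemidef_lapMatrix ℝ G).1).eigenvalues ∘ (Fintype.equivFin V).symm)
      (Tuple.sort ((((SimpleGraph.posSemidef_lapMatrix ℝ G)).1).eigenvalues ∘ (Fintype.equivFin V).symm)
        (Fin.rev ⟨k - 1, h⟩))
  else 0

/-- The Wiener index: the sum of distances over unordered pairs of vertices. -/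
noncomputable def wienerIndex (G : SimpleGraph V) : ℝ :=
  (∑ u, ∑ v, (G.dist u v : ℝ)) / 2


/-- For a simple connected graph on `n ≥ 4` vertices with diameter
`d ≥ 3`, remoteness `ρ` and distance eigenvalues `∂_1 ≥ ⋯ ≥ ∂_n`, we have `ρ + ∂_3 > 0`. -/
-- auxiliary
lemma dist_getVert_le (G : SimpleGraph V) (hconn : G.Connected) {u v : V} (p : G.Walk u v)
    (k i : ℕ) (h : i + k ≤ p.length) :
    G.dist (p.getVert i) (p.getVert (i + k)) ≤ k := by
  induction k with
  | zero => simp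
  | succ m ih =>
    have h1 : G.dist (p.getVert i) (p.getVert (i + m)) ≤ m := ih (by omega)
    have hadj : G.Adj (p.getVert (i + m)) (p.getVert (i + m + 1)) :=
      p.adj_getVert_succ (by omega)
    have h2 : G.dist (p.getVert (i + m)) (p.getVert (i + m + 1)) ≤ 1 :=
      SimpleGraph.dist_le hadj.toWalk
    have h3 := hconn.dist_triangle (u := p.getVert i) (v := p.getVert (i+m))
      (w := p.getVert (i + m + 1))
    show G.dist (p.getVert i) (p.getVert (i + m + 1)) ≤ m + 1
    have h4 : G.dist (p.getVert i) (p.getVert (i + m + 1)) ≤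
        G.dist (p.getVert i) (p.getVert (i+m)) + G.dist (p.getVert (i + m)) (p.getVert (i + m + 1)) := h3
    omega

lemma dist_getVert_eq (G : SimpleGraph V) (hconn : G.Connected) {u v : V} (p : G.Walk u v)
    (hp : p.length = G.dist u v) (i j : ℕ) (hij : i ≤ j) (hj : j ≤ p.length) :
    G.dist (p.getVert i) (p.getVert j) = j - i := by
  have h1 : G.dist u (p.getVert i) ≤ i := by
    have := dist_getVert_le G hconn p i 0 (by omega)
    simpa using this
  have h2 : G.dist (p.getVert i) (p.getVert j) ≤ j - i := by
    have := dist_getVert_le G hconn p (j - i) i (by omega)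
    rwa [show i + (j - i) = j by omega] at this
  have h3 : G.dist (p.getVert j) v ≤ p.length - j := by
    have := dist_getVert_le G hconn p (p.length - j) j (by omega)
    rwa [show j + (p.length - j) = p.length by omega, p.getVert_length] at this
  have h4 : G.dist u v ≤ G.dist u (p.getVert i) + G.dist (p.getVert i) (p.getVert j)
      + G.dist (p.getVert j) v := by
    have t1 := hconn.dist_triangle (u := u) (v := p.getVert j) (w := v)
    have t2 := hconn.dist_triangle (u := u) (v := p.getVert i) (w := p.getVert j)
    omega
  omega

lemma dot_helper (M : Matrix V V ℝ) (v w : V → ℝ) :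
    v ⬝ᵥ (M *ᵥ w) = (Mᵀ *ᵥ v) ⬝ᵥ w := by
  rw [Matrix.mulVec_transpose, Matrix.dotProduct_mulVec]

/-- the two "large eigenvalue" vertices -/
lemma subset_two (G : SimpleGraph V) (h3 : 2 < Fintype.card V) :
    ∃ a₁ a₂ : V, ∀ v : V,
      distEig G 3 < (isHermitian_distMatrix G).eigenvalues v → v = a₁ ∨ v = a₂ := by
  set N := Fintype.card V with hN
  set e := Fintype.equivFin V with he
  set g := ((isHermitian_distMatrix G).eigenvalues ∘ e.symm) with hg
  set σ := Tuple.sort g with hσ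
  have h2 : 3 - 1 < N := by omega
  have hd3 : distEig G 3 = g (σ (Fin.rev ⟨3 - 1, h2⟩)) := by
    rw [distEig, dif_pos h2]
  refine ⟨e.symm (σ ⟨N - 1, by omega⟩), e.symm (σ ⟨N - 2, by omega⟩), fun v hv => ?_⟩
  set i := σ⁻¹ (e v) with hi
  have hvi : e.symm (σ i) = v := by
    rw [hi, Equiv.Perm.inv_def, Equiv.apply_symm_apply, Equiv.symm_apply_apply]
  have hgi : g (σ i) = (isHermitian_distMatrix G).eigenvalues v := by
    rw [hg]; simp only [Function.comp_apply, hvi]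
  have hmono := Tuple.monotone_sort g
  have hlt : ¬ (i ≤ Fin.rev ⟨3 - 1, h2⟩) := by
    intro hle
    have := hmono hle
    simp only [Function.comp_apply] at this
    rw [hgi, ← hd3] at this
    exact absurd hv (not_lt.mpr this)
  have hival : (N : ℕ) - 3 < (i : ℕ) := by
    rw [not_le] at hlt
    have := hlt
    have hrev : ((Fin.rev ⟨3 - 1, h2⟩ : Fin N) : ℕ) = N - 1 - (3 - 1) := Fin.val_rev _
    have : ((Fin.rev ⟨3 - 1, h2⟩ : Fin N) : ℕ) < (i : ℕ) := hlt
    omega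
  have hile : (i : ℕ) < N := i.isLt
  have : i = (⟨N - 1, by omega⟩ : Fin N) ∨ i = (⟨N - 2, by omega⟩ : Fin N) := by
    rcases Nat.lt_or_ge (i : ℕ) (N - 1) with h | h
    · right; apply Fin.ext; simp; omega
    · left; apply Fin.ext; simp; omega
  rcases this with h | h
  · left; rw [← hvi, h]
  · right; rw [← hvi, h]

/-- Rayleigh quotient bound for vectors orthogonal to the top-two eigenvectors. -/
lemma rayleigh_le (G : SimpleGraph V) (x : V → ℝ)
    (hy : ∀ v : V, distEig G 3 < (isHermitian_distMatrix G).eigenvalues v →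
      ((star ((isHermitian_distMatrix G).eigenvectorUnitary : Matrix V V ℝ)) *ᵥ x) v = 0) :
    x ⬝ᵥ (distMatrix G *ᵥ x) ≤ distEig G 3 * (x ⬝ᵥ x) := by
  set ev := (isHermitian_distMatrix G).eigenvalues with hev
  set U : Matrix V V ℝ := ((isHermitian_distMatrix G).eigenvectorUnitary : Matrix V V ℝ) with hU
  have hU1 : U * star U = 1 :=
    (Matrix.mem_unitaryGroup_iff).mp (isHermitian_distMatrix G).eigenvectorUnitary.2
  have hspec : distMatrix G = U * Matrix.diagonal ev * star U := by
    have h := (isHermitian_distMatrix G).spectral_theorem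
    have hdiag : Matrix.diagonal (RCLike.ofReal ∘ (isHermitian_distMatrix G).eigenvalues)
        = Matrix.diagonal ev := by rw [hev]; rfl
    rw [hdiag, Unitary.conjStarAlgAut_apply] at h
    exact h
  clear_value ev U
  set y : V → ℝ := (star U) *ᵥ x with hy'
  have hstar : star U = Uᵀ := by
    ext i j
    simp [Matrix.star_apply]
  have key : x ⬝ᵥ (distMatrix G *ᵥ x) = y ⬝ᵥ (Matrix.diagonal ev *ᵥ y) := by
    rw [hspec, ← Matrix.mulVec_mulVec, ← Matrix.mulVec_mulVec, dot_helper, ← hstar, ← hy']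
  have knorm : x ⬝ᵥ x = y ⬝ᵥ y := by
    have hU1' : U * Uᵀ = 1 := by rw [← hstar]; exact hU1
    rw [hy', dot_helper, hstar, Matrix.transpose_transpose, Matrix.mulVec_mulVec, hU1',
      Matrix.one_mulVec]
  rw [key, knorm]
  have hexp : y ⬝ᵥ (Matrix.diagonal ev *ᵥ y) = ∑ v, ev v * y v ^ 2 := by
    rw [dotProduct]
    apply Finset.sum_congr rfl
    intro v _
    rw [Matrix.mulVec_diagonal]
    ring
  have hexp2 : distEig G 3 * (y ⬝ᵥ y) = ∑ v, distEig G 3 * y v ^ 2 := by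
    rw [dotProduct, Finset.mul_sum]
    apply Finset.sum_congr rfl
    intro v _
    ring
  rw [hexp, hexp2]
  apply Finset.sum_le_sum
  intro v _
  rcases le_or_gt (ev v) (distEig G 3) with h | h
  · exact mul_le_mul_of_nonneg_right h (sq_nonneg _)
  · rw [hy v h]
    simp


lemma quad_ineq (a b d y0 y1 y2 y3 : ℝ)
    (h0 : y0 = a * 15 + b * 5 + d * 5)
    (h1 : y1 = a * 11 + b * (-12) + d * (-7))
    (h2 : y2 = a * 11 + b * 12 + d * (-7))
    (h3 : y3 = a * 15 + b * (-5) + d * 5) :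
    -(5/4 : ℝ) * (y0 * y0 + y1 * y1 + y2 * y2 + y3 * y3)
      ≤ y0 * (0 * y0 + 1 * y1 + 2 * y2 + 3 * y3)
        + y1 * (1 * y0 + 0 * y1 + 1 * y2 + 2 * y3)
        + y2 * (2 * y0 + 1 * y1 + 0 * y2 + 1 * y3)
        + y3 * (3 * y0 + 2 * y1 + 1 * y2 + 0 * y3) := by
  have key : y0 * (0 * y0 + 1 * y1 + 2 * y2 + 3 * y3)
        + y1 * (1 * y0 + 0 * y1 + 1 * y2 + 2 * y3)
        + y2 * (2 * y0 + 1 * y1 + 0 * y2 + 1 * y3)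
        + y3 * (3 * y0 + 2 * y1 + 1 * y2 + 0 * y3)
        + (5/4 : ℝ) * (y0 * y0 + y1 * y1 + y2 * y2 + y3 * y3)
      = (1/4437) * (4437 * a - 9 * d)^2 + (449/2) * b^2 + (57600/4437) * d^2 := by
    subst h0 h1 h2 h3
    ring
  nlinarith [sq_nonneg (4437 * a - 9 * d), sq_nonneg b, sq_nonneg d, key]


theorem remoteness_add_distEig_three_pos (n : ℕ) (hn : 4 ≤ n) (G : SimpleGraph (Fin n))
    (hconn : G.Connected) (hd : 3 ≤ G.diam) :
    0 < remoteness G + distEig G 3 := by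
  classical
  have hcard : Fintype.card (Fin n) = n := Fintype.card_fin n
  have hne : Nonempty (Fin n) := ⟨⟨0, by omega⟩⟩
  -- geodesic of length 3
  obtain ⟨u, v, huv⟩ := SimpleGraph.exists_dist_eq_diam (G := G)
  have hduv : 3 ≤ G.dist u v := huv ▸ hd
  obtain ⟨p, hp⟩ := hconn.exists_walk_length_eq_dist u v
  have hlen : 3 ≤ p.length := by omega
  set u₀ := p.getVert 0 with hu₀
  set u₁ := p.getVert 1 with hu₁
  set u₂ := p.getVert 2 with hu₂
  set u₃ := p.getVert 3 with hu₃
  have d01 : G.dist u₀ u₁ = 1 :=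
    dist_getVert_eq G hconn p hp 0 1 (by omega) (by omega)
  have d02 : G.dist u₀ u₂ = 2 :=
    dist_getVert_eq G hconn p hp 0 2 (by omega) (by omega)
  have d03 : G.dist u₀ u₃ = 3 :=
    dist_getVert_eq G hconn p hp 0 3 (by omega) (by omega)
  have d12 : G.dist u₁ u₂ = 1 :=
    dist_getVert_eq G hconn p hp 1 2 (by omega) (by omega)
  have d13 : G.dist u₁ u₃ = 2 :=
    dist_getVert_eq G hconn p hp 1 3 (by omega) (by omega)
  have d23 : G.dist u₂ u₃ = 1 :=
    dist_getVert_eq G hconn p hp 2 3 (by omega) (by omega)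
  -- distinctness
  have ne01 : u₀ ≠ u₁ := by intro h; rw [h, SimpleGraph.dist_self] at d01; omega
  have ne02 : u₀ ≠ u₂ := by intro h; rw [h, SimpleGraph.dist_self] at d02; omega
  have ne03 : u₀ ≠ u₃ := by intro h; rw [h, SimpleGraph.dist_self] at d03; omega
  have ne12 : u₁ ≠ u₂ := by intro h; rw [h, SimpleGraph.dist_self] at d12; omega
  have ne13 : u₁ ≠ u₃ := by intro h; rw [h, SimpleGraph.dist_self] at d13; omega
  have ne23 : u₂ ≠ u₃ := by intro h; rw [h, SimpleGraph.dist_self] at d23; omega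
  have ne10 := ne01.symm
  have ne20 := ne02.symm
  have ne30 := ne03.symm
  have ne21 := ne12.symm
  have ne31 := ne13.symm
  have ne32 := ne23.symm
  -- remoteness bound
  have htr : 3 * n ≤ transmission G u₀ + transmission G u₃ := by
    have hterm : ∀ w : Fin n, 3 ≤ G.dist u₀ w + G.dist u₃ w := by
      intro w
      have t := hconn.dist_triangle (u := u₀) (v := w) (w := u₃)
      have hc : G.dist w u₃ = G.dist u₃ w := SimpleGraph.dist_comm
      omega
    have hsum : ∑ _w : Fin n, 3 ≤ ∑ w : Fin n, (G.dist u₀ w + G.dist u₃ w) :=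
      Finset.sum_le_sum (fun w _ => hterm w)
    rw [Finset.sum_const, Finset.card_univ, hcard, smul_eq_mul, mul_comm] at hsum
    rw [transmission, transmission, ← Finset.sum_add_distrib]
    exact le_of_eq_of_le (by ring) hsum
  have hsup0 : transmission G u₀ ≤ univ.sup (transmission G) := Finset.le_sup (mem_univ u₀)
  have hsup3 : transmission G u₃ ≤ univ.sup (transmission G) := Finset.le_sup (mem_univ u₃)
  have hρ : (5 : ℝ)/4 < remoteness G := by
    rw [remoteness, hcard]
    have hpos : (0:ℝ) < (n:ℝ) - 1 := by
      have : (4:ℝ) ≤ (n:ℝ) := by exact_mod_cast hn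
      linarith
    rw [lt_div_iff₀ hpos]
    have hsnat : 3 * n ≤ 2 * (univ.sup (transmission G)) := by omega
    have hs : (3:ℝ) * (n:ℝ) ≤ 2 * ((univ.sup (transmission G) : ℕ) : ℝ) := by
      exact_mod_cast hsnat
    have hn4 : (4:ℝ) ≤ (n:ℝ) := by exact_mod_cast hn
    linarith
  -- eigenvalue bound
  have h3 : 2 < Fintype.card (Fin n) := by omega
  obtain ⟨a₁, a₂, ha⟩ := subset_two G h3
  set W1 : Fin n → ℝ := fun w =>
    if w = u₀ then 15 else if w = u₁ then 11 else if w = u₂ then 11 else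
      if w = u₃ then 15 else 0 with hW1
  set W2 : Fin n → ℝ := fun w =>
    if w = u₀ then 5 else if w = u₁ then -12 else if w = u₂ then 12 else
      if w = u₃ then -5 else 0 with hW2
  set W3 : Fin n → ℝ := fun w =>
    if w = u₀ then 5 else if w = u₁ then -7 else if w = u₂ then -7 else
      if w = u₃ then 5 else 0 with hW3
  have hcomb : ∀ s t : Fin 3 → ℝ,
      (s 0 + t 0) • W1 + (s 1 + t 1) • W2 + (s 2 + t 2) • W3
        = (s 0 • W1 + s 1 • W2 + s 2 • W3) + (t 0 • W1 + t 1 • W2 + t 2 • W3) := by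
    intro s t
    funext w
    simp only [Pi.add_apply, Pi.smul_apply, smul_eq_mul]
    ring
  have hcombs : ∀ (r : ℝ) (t : Fin 3 → ℝ),
      (r * t 0) • W1 + (r * t 1) • W2 + (r * t 2) • W3
        = r • (t 0 • W1 + t 1 • W2 + t 2 • W3) := by
    intro r t
    funext w
    simp only [Pi.add_apply, Pi.smul_apply, smul_eq_mul]
    ring
  set L : (Fin 3 → ℝ) →ₗ[ℝ] (Fin 2 → ℝ) :=
    { toFun := fun t => fun j =>
        ((star ((isHermitian_distMatrix G).eigenvectorUnitary : Matrix (Fin n) (Fin n) ℝ))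
          *ᵥ (t 0 • W1 + t 1 • W2 + t 2 • W3)) (if j = 0 then a₁ else a₂)
      map_add' := by
        intro s t
        funext j
        simp only [Pi.add_apply]
        rw [hcomb s t, Matrix.mulVec_add, Pi.add_apply]
      map_smul' := by
        intro r t
        funext j
        simp only [Pi.smul_apply, smul_eq_mul, RingHom.id_apply]
        rw [hcombs r t, Matrix.mulVec_smul, Pi.smul_apply, smul_eq_mul] } with hL
  have hnotinj : ¬ Function.Injective L := by
    intro hinj
    have h := LinearMap.finrank_le_finrank_of_injective hinj
    rw [Module.finrank_fin_fun, Module.finrank_fin_fun] at h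
    omega
  rw [Function.not_injective_iff] at hnotinj
  obtain ⟨s, t, hst, hstne⟩ := hnotinj
  set c : Fin 3 → ℝ := s - t with hc
  have hc0 : c ≠ 0 := sub_ne_zero.mpr hstne
  have hLc : L c = 0 := by rw [hc, map_sub, hst, sub_self]
  set x : Fin n → ℝ := c 0 • W1 + c 1 • W2 + c 2 • W3 with hx
  have hycond : ∀ w : Fin n, distEig G 3 < (isHermitian_distMatrix G).eigenvalues w →
      ((star ((isHermitian_distMatrix G).eigenvectorUnitary : Matrix (Fin n) (Fin n) ℝ))
        *ᵥ x) w = 0 := by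
    intro w hw
    rcases ha w hw with rfl | rfl
    · have h0 := congrFun hLc (0 : Fin 2)
      exact h0
    · have h1 := congrFun hLc (1 : Fin 2)
      exact h1
  -- coordinates of x
  have hx0 : x u₀ = c 0 * 15 + c 1 * 5 + c 2 * 5 := by
    rw [hx]
    simp [hW1, hW2, hW3, ne01, ne02, ne03]
  have hx1 : x u₁ = c 0 * 11 + c 1 * (-12) + c 2 * (-7) := by
    rw [hx]
    simp [hW1, hW2, hW3, ne10, ne12, ne13]
  have hx2 : x u₂ = c 0 * 11 + c 1 * 12 + c 2 * (-7) := by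
    rw [hx]
    simp [hW1, hW2, hW3, ne20, ne21, ne23]
  have hx3 : x u₃ = c 0 * 15 + c 1 * (-5) + c 2 * 5 := by
    rw [hx]
    simp [hW1, hW2, hW3, ne30, ne31, ne32]
  have hsupp : ∀ w : Fin n, w ≠ u₀ → w ≠ u₁ → w ≠ u₂ → w ≠ u₃ → x w = 0 := by
    intro w h0 h1 h2 h3'
    rw [hx]
    simp [hW1, hW2, hW3, h0, h1, h2, h3']
  clear_value x c
  clear hLc hL hst hstne hc hx
  clear L hcomb hcombs s t hW1 hW2 hW3 W1 W2 W3
  -- x ≠ 0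
  have hxne : x ≠ 0 := by
    intro h0
    apply hc0
    have e0 : c 0 * 15 + c 1 * 5 + c 2 * 5 = 0 := by rw [← hx0, h0]; rfl
    have e1 : c 0 * 11 + c 1 * (-12) + c 2 * (-7) = 0 := by rw [← hx1, h0]; rfl
    have e3 : c 0 * 15 + c 1 * (-5) + c 2 * 5 = 0 := by rw [← hx3, h0]; rfl
    have hb : c 1 = 0 := by linarith
    have ha' : c 0 = 0 := by linarith
    have hcc : c 2 = 0 := by linarith
    funext k
    fin_cases k
    · exact ha'
    · exact hb
    · exact hcc
  -- restricted sums
  have hrestrict : ∀ f : Fin n → ℝ,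
      (∀ w : Fin n, w ≠ u₀ → w ≠ u₁ → w ≠ u₂ → w ≠ u₃ → f w = 0) →
      ∑ w, f w = f u₀ + f u₁ + f u₂ + f u₃ := by
    intro f hf
    have hsub : ({u₀, u₁, u₂, u₃} : Finset (Fin n)) ⊆ univ := Finset.subset_univ _
    have hvan : ∀ w ∈ (univ : Finset (Fin n)),
        w ∉ ({u₀, u₁, u₂, u₃} : Finset (Fin n)) → f w = 0 := by
      intro w _ hw
      simp only [Finset.mem_insert, Finset.mem_singleton, not_or] at hw
      exact hf w hw.1 hw.2.1 hw.2.2.1 hw.2.2.2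
    rw [← Finset.sum_subset hsub hvan]
    rw [show ({u₀, u₁, u₂, u₃} : Finset (Fin n))
        = insert u₀ (insert u₁ (insert u₂ {u₃})) from rfl]
    rw [Finset.sum_insert (by simp [ne01, ne02, ne03]),
      Finset.sum_insert (by simp [ne12, ne13]),
      Finset.sum_insert (by simp [ne23]), Finset.sum_singleton]
    ring
  -- distance matrix entries
  have D00 : distMatrix G u₀ u₀ = 0 := by simp [distMatrix]
  have D11 : distMatrix G u₁ u₁ = 0 := by simp [distMatrix]
  have D22 : distMatrix G u₂ u₂ = 0 := by simp [distMatrix]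
  have D33 : distMatrix G u₃ u₃ = 0 := by simp [distMatrix]
  have D01 : distMatrix G u₀ u₁ = 1 := by simp [distMatrix, d01]
  have D02 : distMatrix G u₀ u₂ = 2 := by simp [distMatrix, d02]
  have D03 : distMatrix G u₀ u₃ = 3 := by simp [distMatrix, d03]
  have D12 : distMatrix G u₁ u₂ = 1 := by simp [distMatrix, d12]
  have D13 : distMatrix G u₁ u₃ = 2 := by simp [distMatrix, d13]
  have D23 : distMatrix G u₂ u₃ = 1 := by simp [distMatrix, d23]
  have D10 : distMatrix G u₁ u₀ = 1 := by
    rw [show distMatrix G u₁ u₀ = distMatrix G u₀ u₁ from by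
      simp [distMatrix, SimpleGraph.dist_comm], D01]
  have D20 : distMatrix G u₂ u₀ = 2 := by
    rw [show distMatrix G u₂ u₀ = distMatrix G u₀ u₂ from by
      simp [distMatrix, SimpleGraph.dist_comm], D02]
  have D30 : distMatrix G u₃ u₀ = 3 := by
    rw [show distMatrix G u₃ u₀ = distMatrix G u₀ u₃ from by
      simp [distMatrix, SimpleGraph.dist_comm], D03]
  have D21 : distMatrix G u₂ u₁ = 1 := by
    rw [show distMatrix G u₂ u₁ = distMatrix G u₁ u₂ from by
      simp [distMatrix, SimpleGraph.dist_comm], D12]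
  have D31 : distMatrix G u₃ u₁ = 2 := by
    rw [show distMatrix G u₃ u₁ = distMatrix G u₁ u₃ from by
      simp [distMatrix, SimpleGraph.dist_comm], D13]
  have D32 : distMatrix G u₃ u₂ = 1 := by
    rw [show distMatrix G u₃ u₂ = distMatrix G u₂ u₃ from by
      simp [distMatrix, SimpleGraph.dist_comm], D23]
  -- inner products
  have hinner : ∀ w : Fin n, (distMatrix G *ᵥ x) w
      = distMatrix G w u₀ * x u₀ + distMatrix G w u₁ * x u₁
        + distMatrix G w u₂ * x u₂ + distMatrix G w u₃ * x u₃ := by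
    intro w
    rw [Matrix.mulVec, dotProduct]
    exact hrestrict (fun w' => distMatrix G w w' * x w')
      (fun w' h0 h1 h2 h3' => by
        show distMatrix G w w' * x w' = 0
        rw [hsupp w' h0 h1 h2 h3', mul_zero])
  have hnormsum : x ⬝ᵥ x = x u₀ * x u₀ + x u₁ * x u₁ + x u₂ * x u₂ + x u₃ * x u₃ := by
    rw [dotProduct]
    exact hrestrict (fun w => x w * x w)
      (fun w h0 h1 h2 h3' => by
        show x w * x w = 0
        rw [hsupp w h0 h1 h2 h3', mul_zero])
  have hQsum : x ⬝ᵥ (distMatrix G *ᵥ x)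
      = x u₀ * (distMatrix G *ᵥ x) u₀ + x u₁ * (distMatrix G *ᵥ x) u₁
        + x u₂ * (distMatrix G *ᵥ x) u₂ + x u₃ * (distMatrix G *ᵥ x) u₃ := by
    rw [dotProduct]
    exact hrestrict (fun w => x w * (distMatrix G *ᵥ x) w)
      (fun w h0 h1 h2 h3' => by
        show x w * (distMatrix G *ᵥ x) w = 0
        rw [hsupp w h0 h1 h2 h3', zero_mul])
  -- norm positive
  have hnormpos : 0 < x ⬝ᵥ x := by
    rw [hnormsum]
    obtain ⟨w, hw⟩ := Function.ne_iff.mp hxne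
    simp only [Pi.zero_apply] at hw
    have hwS : w = u₀ ∨ w = u₁ ∨ w = u₂ ∨ w = u₃ := by
      by_contra hcon
      push_neg at hcon
      exact hw (hsupp w hcon.1 hcon.2.1 hcon.2.2.1 hcon.2.2.2)
    have hsq : 0 < x w * x w := mul_self_pos.mpr hw
    rcases hwS with rfl | rfl | rfl | rfl
    · nlinarith [mul_self_nonneg (x u₁), mul_self_nonneg (x u₂), mul_self_nonneg (x u₃)]
    · nlinarith [mul_self_nonneg (x u₀), mul_self_nonneg (x u₂), mul_self_nonneg (x u₃)]
    · nlinarith [mul_self_nonneg (x u₀), mul_self_nonneg (x u₁), mul_self_nonneg (x u₃)]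
    · nlinarith [mul_self_nonneg (x u₀), mul_self_nonneg (x u₁), mul_self_nonneg (x u₂)]
  -- quadratic form bound
  have hQbound : -(5/4 : ℝ) * (x ⬝ᵥ x) ≤ x ⬝ᵥ (distMatrix G *ᵥ x) := by
    rw [hQsum, hnormsum, hinner u₀, hinner u₁, hinner u₂, hinner u₃,
      D00, D01, D02, D03, D10, D11, D12, D13, D20, D21, D22, D23, D30, D31, D32, D33]
    exact quad_ineq (c 0) (c 1) (c 2) (x u₀) (x u₁) (x u₂) (x u₃) hx0 hx1 hx2 hx3
  have hray := rayleigh_le G x hycond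
  have hd3 : -(5/4 : ℝ) ≤ distEig G 3 := by
    have h := le_trans hQbound hray
    have := (mul_le_mul_iff_of_pos_right hnormpos).mp h
    linarith
  linarith


end DistPaper
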